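/- Let P = (X, ≤) be an N-free poset whose comparability graph is connected. Then there exists x ∈ X with C_x nonempty if and only if P is a linear sum of at least two nonempty parts, i.e., there exists a nonempty proper subset A of X such that every element of A is strictly below every element of X \ A. -/

import Mathlib

/-- `(a,b,c,d)` is an `N` in the poset: the four elements are distinct, `a < b`, `c < b`,
`c < d`, and these are the only comparabilities among them. -/
def IsN {X : Type*} [PartialOrder X] (a b c d : X) : Prop :=
  a ≠ b ∧ a ≠ c ∧ a ≠ d ∧ b ≠ c ∧ b ≠ d ∧ c ≠ d ∧
  a < b ∧ c < b ∧ c < d ∧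
  (¬ a ≤ c ∧ ¬ c ≤ a) ∧ (¬ a ≤ d ∧ ¬ d ≤ a) ∧ (¬ b ≤ d ∧ ¬ d ≤ b)

/-- A poset is `N`-free if it contains no `N`. -/
def NFree (X : Type*) [PartialOrder X] : Prop :=
  ∀ a b c d : X, ¬ IsN a b c d

/-- `inc(x)`: the set of elements incomparable to `x`. -/
def incP {X : Type*} [PartialOrder X] (x : X) : Set X :=
  {y | ¬ x ≤ y ∧ ¬ y ≤ x}

/-- The comparability graph of a poset. -/
def compGraph (X : Type*) [PartialOrder X] : SimpleGraph X where
  Adj u v := u < v ∨ v < u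
  symm := ⟨by intro u v h; exact Or.symm h⟩
  loopless := ⟨by intro u h; rcases h with h | h <;> exact lt_irrefl u h⟩

/-- `A` is a module of the poset: every element outside `A` relates in the same way
to all elements of `A`. -/
def PModule {X : Type*} [PartialOrder X] (A : Set X) : Prop :=
  ∀ v ∉ A, ∀ a ∈ A, ∀ a' ∈ A, (v < a → v < a') ∧ (a < v → a' < v)

/-- `C⁺_x`: elements above `x` comparable to all elements of `inc(x)`. -/
def Cplus {X : Type*} [PartialOrder X] (x : X) : Set X :=
  {y | x < y ∧ ∀ z ∈ incP x, (y ≤ z ∨ z ≤ y)}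

/-- `C⁻_x`: elements below `x` comparable to all elements of `inc(x)`. -/
def Cminus {X : Type*} [PartialOrder X] (x : X) : Set X :=
  {y | y < x ∧ ∀ z ∈ incP x, (y ≤ z ∨ z ≤ y)}

/-- A poset is chain complete if every nonempty chain has a supremum and an infimum. -/
def ChainComplete (X : Type*) [PartialOrder X] : Prop :=
  ∀ C : Set X, C.Nonempty → IsChain (· ≤ ·) C → (∃ s, IsLUB C s) ∧ (∃ i, IsGLB C i)

theorem exists_C_nonempty_iff_linear_sum
    {X : Type*} [PartialOrder X] (hN : NFree X) (hconn : (compGraph X).Connected) :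
    (∃ x : X, (Cminus x ∪ Cplus x).Nonempty) ↔
      ∃ A : Set X, A.Nonempty ∧ A ≠ Set.univ ∧ ∀ a ∈ A, ∀ b ∉ A, a < b := by
  constructor
  · rintro ⟨x, y, hy⟩
    rcases hy with ⟨hyx, hcomp⟩ | ⟨hxy, hcomp⟩
    · -- y ∈ Cminus x : y < x
      refine ⟨{z | z < x ∧ ∀ w ∈ incP x, z < w}, ⟨y, hyx, fun w hw => ?_⟩, ?_, ?_⟩
      · rcases hcomp w hw with h | h
        · exact h.lt_of_ne (fun e => hw.2 (e ▸ hyx.le))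
        · exact absurd (h.trans hyx.le) hw.2
      · intro h
        have hx := (Set.eq_univ_iff_forall.mp h x)
        exact lt_irrefl x hx.1
      · rintro a ⟨hax, haw⟩ b hb
        simp only [Set.mem_setOf_eq, not_and, not_forall] at hb
        by_cases hxb : x ≤ b
        · exact hax.trans_le hxb
        by_cases hbx : b ≤ x
        · have hbx' : b < x := hbx.lt_of_ne (fun e => hxb (e ▸ le_refl x))
          obtain ⟨w0, hw0, hbw0⟩ := hb hbx'
          have hnbw : ¬ b ≤ w0 :=
            fun h => hbw0 (h.lt_of_ne (fun e => hw0.2 (e ▸ hbx'.le)))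
          have hnwb : ¬ w0 ≤ b := fun h => hw0.2 (h.trans hbx'.le)
          by_contra hab
          have h1 : ¬ a ≤ b :=
            fun h => hab (h.lt_of_ne (fun e => hbw0 (e ▸ haw w0 hw0)))
          have h2 : ¬ b ≤ a := fun h => hnbw (h.trans (haw w0 hw0).le)
          exact hN b x a w0 ⟨hbx'.ne, fun e => h2 e.le, fun e => hnbw e.le,
            hax.ne', fun e => hw0.1 e.le, (haw w0 hw0).ne,
            hbx', hax, haw w0 hw0, ⟨h2, h1⟩, ⟨hnbw, hnwb⟩, ⟨hw0.1, hw0.2⟩⟩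
        · exact haw b ⟨hxb, hbx⟩
    · -- y ∈ Cplus x : x < y
      refine ⟨{z | ¬ (x < z ∧ ∀ w ∈ incP x, w < z)}, ⟨x, fun h => lt_irrefl x h.1⟩,
        ?_, ?_⟩
      · intro h
        have hy := (Set.eq_univ_iff_forall.mp h y)
        apply hy
        refine ⟨hxy, fun w hw => ?_⟩
        rcases hcomp w hw with h' | h'
        · exact absurd (hxy.le.trans h') hw.1
        · exact h'.lt_of_ne (fun e => hw.1 (e ▸ hxy.le))
      · rintro a ha b hb
        simp only [Set.mem_setOf_eq, not_not] at hb
        obtain ⟨hxb, hwb⟩ := hb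
        simp only [Set.mem_setOf_eq, not_and, not_forall] at ha
        by_cases hax : x ≤ a
        · rcases eq_or_lt_of_le hax with rfl | hax'
          · exact hxb
          obtain ⟨w0, hw0, hw0a⟩ := ha hax'
          have hnwa : ¬ w0 ≤ a :=
            fun h => hw0a (h.lt_of_ne (fun e => hw0.1 (e ▸ hax'.le)))
          have hnaw : ¬ a ≤ w0 := fun h => hw0.1 (hax'.le.trans h)
          by_contra hab
          have h1 : ¬ a ≤ b :=
            fun h => hab (h.lt_of_ne (fun e => hnwa (e ▸ (hwb w0 hw0).le)))
          have h2 : ¬ b ≤ a := fun h => hnwa ((hwb w0 hw0).le.trans h)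
          exact hN w0 b x a ⟨(hwb w0 hw0).ne, fun e => hw0.2 e.le,
            fun e => hnwa e.le, hxb.ne', fun e => h2 e.le, hax'.ne,
            hwb w0 hw0, hxb, hax', ⟨hw0.2, hw0.1⟩, ⟨hnwa, hnaw⟩, ⟨h2, h1⟩⟩
        by_cases hxa : a ≤ x
        · exact (hxa.trans_lt hxb)
        · exact hwb a ⟨hax, hxa⟩
  · rintro ⟨A, ⟨a, ha⟩, hAne, hlt⟩
    obtain ⟨b, hb⟩ : ∃ b, b ∉ A := by
      by_contra h
      push_neg at h
      exact hAne (Set.eq_univ_iff_forall.mpr h)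
    refine ⟨a, b, Or.inr ⟨hlt a ha b hb, fun z hz => ?_⟩⟩
    have hzA : z ∈ A := by
      by_contra h
      exact hz.1 (hlt a ha z h).le
    exact Or.inr (hlt z hzA b hb).le
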